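/- (Covered call lemma) Let V be a nonnegative random variable, r ≥ 0, and σ satisfy E[(V − σ)⁺] = r. Let I and A be {0,1}-valued random variables with A ≤ I pointwise, and suppose V is independent of I. Then E[A·V − I·r] ≤ E[A·min(σ, V)], with equality if and only if the event {I = 1, A = 0, V > σ} has probability zero. -/

import Mathlib

open MeasureTheory

/-- Covered call lemma: if `V ≥ 0` is integrable, `σ` satisfies
`E[(V − σ)⁺] = r ≥ 0`, `I, A` are {0,1}-valued with `A ≤ I` pointwise and `V`
is independent of `I`, then `E[A·V − I·r] ≤ E[A·min(σ, V)]`, with equality iff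
the event `{I = 1, A = 0, V > σ}` has probability zero. -/
theorem covered_call_lemma
    {Ω : Type*} [MeasurableSpace Ω] (μ : Measure Ω) [IsProbabilityMeasure μ]
    (V I A : Ω → ℝ) (σ r : ℝ)
    (hV : Integrable V μ) (hVpos : ∀ᵐ ω ∂μ, 0 ≤ V ω)
    (hI01 : ∀ ω, I ω = 0 ∨ I ω = 1) (hA01 : ∀ ω, A ω = 0 ∨ A ω = 1)
    (hAI : ∀ ω, A ω ≤ I ω)
    (hVmeas : Measurable V) (hImeas : Measurable I) (hAmeas : Measurable A)
    (hindep : ProbabilityTheory.IndepFun V I μ)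
    (hr : 0 ≤ r) (hσ : ∫ ω, max (V ω - σ) 0 ∂μ = r) :
    (∫ ω, (A ω * V ω - I ω * r) ∂μ) ≤ ∫ ω, A ω * min σ (V ω) ∂μ ∧
    ((∫ ω, (A ω * V ω - I ω * r) ∂μ) = (∫ ω, A ω * min σ (V ω) ∂μ) ↔
      μ {ω | I ω = 1 ∧ A ω = 0 ∧ σ < V ω} = 0) := by
  set f : Ω → ℝ := fun ω => max (V ω - σ) 0 with hf_def
  have hfmeas : Measurable f := (hVmeas.sub measurable_const).max measurable_const
  have hf_int : Integrable f μ := (hV.sub (integrable_const σ)).pos_part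
  have hIbdd : ∀ ω, ‖I ω‖ ≤ 1 := by
    intro ω; rcases hI01 ω with h | h <;> simp [h]
  have hAbdd : ∀ ω, ‖A ω‖ ≤ 1 := by
    intro ω; rcases hA01 ω with h | h <;> simp [h]
  have hI_int : Integrable I μ := by
    simpa using (integrable_const (1:ℝ)).bdd_mul hImeas.aestronglyMeasurable (ae_of_all _ hIbdd)
  have hIf_int : Integrable (fun ω => I ω * f ω) μ :=
    hf_int.bdd_mul hImeas.aestronglyMeasurable (ae_of_all _ hIbdd)
  have hAf_int : Integrable (fun ω => A ω * f ω) μ :=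
    hf_int.bdd_mul hAmeas.aestronglyMeasurable (ae_of_all _ hAbdd)
  have hAV_int : Integrable (fun ω => A ω * V ω) μ :=
    hV.bdd_mul hAmeas.aestronglyMeasurable (ae_of_all _ hAbdd)
  have hIr_int : Integrable (fun ω => I ω * r) μ :=
    (integrable_const r).bdd_mul hImeas.aestronglyMeasurable (ae_of_all _ hIbdd)
  have hindep' : ProbabilityTheory.IndepFun f I μ :=
    hindep.comp ((measurable_id.sub measurable_const).max measurable_const) measurable_id
  -- key : ∫ I * f = ∫ I * r
  have hkey : ∫ ω, I ω * f ω ∂μ = ∫ ω, I ω * r ∂μ := by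
    have h1 : ∫ ω, (f * I) ω ∂μ = (∫ ω, f ω ∂μ) * ∫ ω, I ω ∂μ :=
      ProbabilityTheory.IndepFun.integral_mul_eq_mul_integral hindep' hf_int.aestronglyMeasurable hI_int.aestronglyMeasurable
    have h2 : ∫ ω, I ω * f ω ∂μ = ∫ ω, (f * I) ω ∂μ := by
      apply integral_congr_ae; filter_upwards with ω; simp [mul_comm]
    rw [h2, h1, hσ, integral_mul_const]
    ring
  -- LHS
  have hLHS : (∫ ω, (A ω * V ω - I ω * r) ∂μ)
      = (∫ ω, A ω * V ω ∂μ) - ∫ ω, I ω * f ω ∂μ := by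
    rw [integral_sub hAV_int hIr_int, hkey]
  -- RHS
  have hRHS : (∫ ω, A ω * min σ (V ω) ∂μ)
      = (∫ ω, A ω * V ω ∂μ) - ∫ ω, A ω * f ω ∂μ := by
    rw [← integral_sub hAV_int hAf_int]
    apply integral_congr_ae; filter_upwards with ω
    rcases le_total σ (V ω) with h | h
    · simp [hf_def, max_eq_left (sub_nonneg.2 h), min_eq_left h]; ring
    · simp [hf_def, max_eq_right (sub_nonpos.2 h), min_eq_right h]
  -- difference
  set g : Ω → ℝ := fun ω => (I ω - A ω) * f ω with hg_def
  have hg_nonneg : ∀ ω, 0 ≤ g ω := fun ω =>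
    mul_nonneg (sub_nonneg.2 (hAI ω)) (le_max_right _ _)
  have hg_int : Integrable g μ := by
    have : g = fun ω => I ω * f ω - A ω * f ω := by
      funext ω; simp [hg_def]; ring
    rw [this]; exact hIf_int.sub hAf_int
  have hdiff : (∫ ω, A ω * min σ (V ω) ∂μ) - (∫ ω, (A ω * V ω - I ω * r) ∂μ)
      = ∫ ω, g ω ∂μ := by
    rw [hLHS, hRHS, hg_def]
    rw [show (fun ω => (I ω - A ω) * f ω) = fun ω => I ω * f ω - A ω * f ω from by
      funext ω; ring]
    rw [integral_sub hIf_int hAf_int]; ring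
  have hg_int_nonneg : 0 ≤ ∫ ω, g ω ∂μ := integral_nonneg hg_nonneg
  constructor
  · linarith [hdiff, hg_int_nonneg]
  · have hset : {ω | ¬ g ω = 0} = {ω | I ω = 1 ∧ A ω = 0 ∧ σ < V ω} := by
      ext ω
      simp only [Set.mem_setOf_eq, hg_def]
      constructor
      · intro h
        have h1 : I ω - A ω ≠ 0 := fun hc => h (by rw [hc]; ring)
        have h2 : f ω ≠ 0 := fun hc => h (by rw [hc]; ring)
        have hAIω := hAI ω
        have hI1 : I ω = 1 ∧ A ω = 0 := by
          rcases hI01 ω with hi | hi <;> rcases hA01 ω with ha | ha <;>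
            simp_all <;> linarith
        refine ⟨hI1.1, hI1.2, ?_⟩
        by_contra hc
        push_neg at hc
        exact h2 (max_eq_right (sub_nonpos.2 hc))
      · rintro ⟨h1, h2, h3⟩
        have : f ω = V ω - σ := max_eq_left (sub_nonneg.2 h3.le)
        rw [h1, h2, this]
        intro hc
        nlinarith
    constructor
    · intro heq
      have hzero : ∫ ω, g ω ∂μ = 0 := by linarith [hdiff]
      have := (integral_eq_zero_iff_of_nonneg hg_nonneg hg_int).1 hzero
      rw [← hset]
      exact (ae_iff.1 this)
    · intro hμ
      have : ∀ᵐ ω ∂μ, g ω = 0 := by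
        rw [ae_iff]
        simpa [hset] using hμ
      have hzero : ∫ ω, g ω ∂μ = 0 := by
        rw [integral_congr_ae this, integral_zero]
      linarith [hdiff]
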